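/- Under the same setup (terminal ℚ-Gorenstein cone with functional m satisfying ⟨m, v_i⟩ = 1 on primitive ray generators), any lattice point w in the interior of τ with ⟨m, w⟩ ≤ 2 is minimal among nonzero non-ray lattice points of τ with respect to the order u ≤ w iff w − u ∈ τ ∩ N. -/
import Mathlib


/-- In a terminal ℚ-Gorenstein cone, an interior lattice point `w` with `⟨m, w⟩ ≤ 2`
is minimal in the set `S` of nonzero lattice points of `τ` not lying on the rays,
with respect to the order `u ≤ w` iff `w - u ∈ τ ∩ N`. -/
theorem terminal_cone_low_discrepancy_minimal
    (n k : ℕ) (τ : Set (Fin n → ℝ))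
    (hadd : ∀ x y, x ∈ τ → y ∈ τ → x + y ∈ τ)
    (v : Fin k → (Fin n → ℤ))
    (hv : ∀ i, (fun j => ((v i) j : ℝ)) ∈ τ)
    (m : (Fin n → ℤ) →ₗ[ℤ] ℚ)
    (hm1 : ∀ i, m (v i) = 1)
    (hterminal : ∀ w : Fin n → ℤ, (fun j => (w j : ℝ)) ∈ τ → m w ≤ 1 →
      w = 0 ∨ ∃ i, w = v i)
    (w : Fin n → ℤ)
    (hwint : (fun j => (w j : ℝ)) ∈ interior τ)
    (hwlat : (fun j => (w j : ℝ)) ∈ τ)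
    (hw2 : m w ≤ 2) :
    ∀ u : Fin n → ℤ,
      (fun j => (u j : ℝ)) ∈ τ →                         -- u is a lattice point of τ
      u ≠ 0 →                                            -- u is nonzero
      (∀ (i : Fin k) (c : ℕ), u ≠ c • v i) →             -- u is not on a ray ℤ₊ · vᵢ
      (fun j => ((w - u) j : ℝ)) ∈ τ →                   -- w - u ∈ τ ∩ N, i.e. u ≤ w
      u = w := by
  intro u hu hu0 huray hwu
  by_cases h : m u ≤ 1
  · rcases hterminal u hu h with rfl | ⟨i, rfl⟩
    · exact absurd rfl hu0
    · exact absurd (one_smul ℕ (v i)).symm (huray i 1)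
  · push_neg at h
    have hsub := map_sub m w u
    have hd : m (w - u) ≤ 1 := by rw [hsub]; linarith
    rcases hterminal (w - u) hwu hd with h0 | ⟨i, hi⟩
    · exact (sub_eq_zero.mp h0).symm
    · rw [hi, hm1 i] at hsub
      linarith
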